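/- Let θ_1, θ_2, θ_3 : ℝ → ℝ be a solution of the identical Kuramoto model for N = 3, let Δ_1 = θ_1 − θ_2, Δ_2 = θ_2 − θ_3, Δ_3 = θ_3 − θ_1, and define the complex-valued functions X_j(t) = exp(i·Δ_j(t)) for j = 1, 2, 3. Then each X_j is differentiable with X_j'(t) = (K/6)·(∑_{k=1}^3 (X_k(t) − 1/X_k(t)))·X_j(t) − (K/2)·(X_j(t)² − 1). -/

import Mathlib

open Complex

lemma aux_exp_deriv (Δ : ℝ → ℝ) (d t : ℝ) (h : HasDerivAt Δ d t) :
    HasDerivAt (fun s => Complex.exp (I * (Δ s : ℂ)))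
      (I * (d : ℂ) * Complex.exp (I * (Δ t : ℂ))) t := by
  have h1 : HasDerivAt (fun s => ((Δ s : ℝ) : ℂ)) (d : ℂ) t := h.ofReal_comp
  have h2 := (h1.const_mul I).cexp
  convert h2 using 1
  ring

lemma L1 (x : ℝ) :
    Complex.exp (I * (x:ℂ)) - 1 / Complex.exp (I * (x:ℂ)) = 2 * I * (Real.sin x : ℂ) := by
  rw [one_div, ← Complex.exp_neg]
  push_cast
  rw [show Complex.sin (x:ℂ) = (Complex.exp (-(x:ℂ)*I) - Complex.exp ((x:ℂ)*I)) * I / 2 from rfl,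
    show -(x:ℂ)*I = -(I*(x:ℂ)) by ring, show (x:ℂ)*I = I*(x:ℂ) by ring]
  linear_combination (Complex.exp (I*(x:ℂ)) - Complex.exp (-(I*(x:ℂ)))) * Complex.I_sq

lemma L2 (x : ℝ) :
    (Complex.exp (I * (x:ℂ)))^2 - 1 = 2 * I * (Real.sin x : ℂ) * Complex.exp (I * (x:ℂ)) := by
  have h := L1 x
  have hne : Complex.exp (I * (x:ℂ)) ≠ 0 := Complex.exp_ne_zero _
  calc (Complex.exp (I * (x:ℂ)))^2 - 1
      = (Complex.exp (I * (x:ℂ)) - 1 / Complex.exp (I * (x:ℂ))) * Complex.exp (I * (x:ℂ)) := by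
        field_simp
    _ = 2 * I * (Real.sin x : ℂ) * Complex.exp (I * (x:ℂ)) := by rw [h]

theorem riccati_equation_Xj
    (ω K : ℝ) (θ1 θ2 θ3 : ℝ → ℝ)
    (h1 : ∀ t : ℝ, HasDerivAt θ1
      (ω + K / 3 * (Real.sin (θ1 t - θ1 t) + Real.sin (θ2 t - θ1 t) + Real.sin (θ3 t - θ1 t))) t)
    (h2 : ∀ t : ℝ, HasDerivAt θ2
      (ω + K / 3 * (Real.sin (θ1 t - θ2 t) + Real.sin (θ2 t - θ2 t) + Real.sin (θ3 t - θ2 t))) t)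
    (h3 : ∀ t : ℝ, HasDerivAt θ3
      (ω + K / 3 * (Real.sin (θ1 t - θ3 t) + Real.sin (θ2 t - θ3 t) + Real.sin (θ3 t - θ3 t))) t)
    (Δ1 Δ2 Δ3 : ℝ → ℝ)
    (hΔ1 : ∀ t, Δ1 t = θ1 t - θ2 t)
    (hΔ2 : ∀ t, Δ2 t = θ2 t - θ3 t)
    (hΔ3 : ∀ t, Δ3 t = θ3 t - θ1 t)
    (X1 X2 X3 : ℝ → ℂ)
    (hX1 : ∀ t, X1 t = Complex.exp (I * (Δ1 t : ℂ)))
    (hX2 : ∀ t, X2 t = Complex.exp (I * (Δ2 t : ℂ)))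
    (hX3 : ∀ t, X3 t = Complex.exp (I * (Δ3 t : ℂ))) :
    ∀ t : ℝ,
      HasDerivAt X1
        ((K : ℂ) / 6 * ((X1 t - 1 / X1 t) + (X2 t - 1 / X2 t) + (X3 t - 1 / X3 t)) * X1 t
          - (K : ℂ) / 2 * ((X1 t) ^ 2 - 1)) t ∧
      HasDerivAt X2
        ((K : ℂ) / 6 * ((X1 t - 1 / X1 t) + (X2 t - 1 / X2 t) + (X3 t - 1 / X3 t)) * X2 t
          - (K : ℂ) / 2 * ((X2 t) ^ 2 - 1)) t ∧
      HasDerivAt X3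
        ((K : ℂ) / 6 * ((X1 t - 1 / X1 t) + (X2 t - 1 / X2 t) + (X3 t - 1 / X3 t)) * X3 t
          - (K : ℂ) / 2 * ((X3 t) ^ 2 - 1)) t := by
  have hX1f : X1 = fun s => Complex.exp (I * (Δ1 s : ℂ)) := funext hX1
  have hX2f : X2 = fun s => Complex.exp (I * (Δ2 s : ℂ)) := funext hX2
  have hX3f : X3 = fun s => Complex.exp (I * (Δ3 s : ℂ)) := funext hX3
  have hΔ1f : Δ1 = fun s => θ1 s - θ2 s := funext hΔ1
  have hΔ2f : Δ2 = fun s => θ2 s - θ3 s := funext hΔ2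
  have hΔ3f : Δ3 = fun s => θ3 s - θ1 s := funext hΔ3
  subst hX1f hX2f hX3f hΔ1f hΔ2f hΔ3f
  intro t
  have hd1 : HasDerivAt (fun s => θ1 s - θ2 s)
      (K/3 * (Real.sin (θ2 t - θ3 t) + Real.sin (θ3 t - θ1 t) - 2 * Real.sin (θ1 t - θ2 t))) t := by
    have h : HasDerivAt (fun s => θ1 s - θ2 s) _ t := (h1 t).sub (h2 t)
    convert h using 1
    simp only [Real.sin_sub]
    ring
  have hd2 : HasDerivAt (fun s => θ2 s - θ3 s)
      (K/3 * (Real.sin (θ3 t - θ1 t) + Real.sin (θ1 t - θ2 t) - 2 * Real.sin (θ2 t - θ3 t))) t := by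
    have h : HasDerivAt (fun s => θ2 s - θ3 s) _ t := (h2 t).sub (h3 t)
    convert h using 1
    simp only [Real.sin_sub]
    ring
  have hd3 : HasDerivAt (fun s => θ3 s - θ1 s)
      (K/3 * (Real.sin (θ1 t - θ2 t) + Real.sin (θ2 t - θ3 t) - 2 * Real.sin (θ3 t - θ1 t))) t := by
    have h : HasDerivAt (fun s => θ3 s - θ1 s) _ t := (h3 t).sub (h1 t)
    convert h using 1
    simp only [Real.sin_sub]
    ring
  refine ⟨?_, ?_, ?_⟩
  · have h := aux_exp_deriv _ _ t hd1
    convert h using 1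
    rw [L1 (θ1 t - θ2 t), L1 (θ2 t - θ3 t), L1 (θ3 t - θ1 t), L2 (θ1 t - θ2 t)]
    push_cast
    ring
  · have h := aux_exp_deriv _ _ t hd2
    convert h using 1
    rw [L1 (θ1 t - θ2 t), L1 (θ2 t - θ3 t), L1 (θ3 t - θ1 t), L2 (θ2 t - θ3 t)]
    push_cast
    ring
  · have h := aux_exp_deriv _ _ t hd3
    convert h using 1
    rw [L1 (θ1 t - θ2 t), L1 (θ2 t - θ3 t), L1 (θ3 t - θ1 t), L2 (θ3 t - θ1 t)]
    push_cast
    ring
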